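/- Let p, q ≥ 2 be integers, μ ∈ ℂ ∖ {0}, r = gcd(p−1, q−1), A = 1/p^{1/(p−1)}, B = 1/q^{1/(q−1)}, and c_k = (−2·arg μ + 2πk)/(p−1) for k ∈ ℤ. A point (u, v) ∈ ℂ × ℂ is a singular point of P(u,v;μ) if and only if there exist k ∈ {0, 1, …, r−1} and θ ∈ ℝ such that u = A·e^{i((q−1)θ/r + c_k)} and v = B·e^{i(p−1)θ/r}. In particular, the set of singular points of P lies on the torus {(u,v) : |u| = A, |v| = B} and is the union of the r curves C_k parametrized as above. -/

import Mathlib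

open Complex

lemma line_cond (a b w : ℂ) :
    (∀ h : ℂ, ((starRingEnd ℂ) (a * h + b * (starRingEnd ℂ) h) * w).re = 0)
    ↔ a * (starRingEnd ℂ) w + (starRingEnd ℂ) b * w = 0 := by
  constructor
  · intro H
    set c := a * (starRingEnd ℂ) w + (starRingEnd ℂ) b * w with hc
    have h1 := H ((starRingEnd ℂ) c)
    have heq : ((starRingEnd ℂ) (a * (starRingEnd ℂ) c + b * (starRingEnd ℂ) ((starRingEnd ℂ) c)) * w).re
        = (c * (starRingEnd ℂ) c).re := by
      simp only [map_add, map_mul, conj_conj, hc]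
      simp [Complex.mul_re, Complex.add_re, Complex.add_im, Complex.mul_im,
        Complex.conj_re, Complex.conj_im]
      ring
    rw [heq, Complex.mul_conj] at h1
    have : Complex.normSq c = 0 := by exact_mod_cast h1
    exact Complex.normSq_eq_zero.mp this
  · intro E h
    have key : (starRingEnd ℂ) (a * h + b * (starRingEnd ℂ) h) * w
        = (starRingEnd ℂ) (a * (starRingEnd ℂ) w * h) - a * (starRingEnd ℂ) w * h := by
      simp only [map_add, map_mul, conj_conj]
      linear_combination h * E
    rw [key]
    simp only [Complex.sub_re, Complex.conj_re, sub_self]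

lemma not_surj_iff (T : (ℂ × ℂ) →L[ℝ] ℂ) :
    ¬ Function.Surjective ⇑T ↔ ∃ w : ℂ, w ≠ 0 ∧ ∀ x, (starRingEnd ℂ (T x) * w).re = 0 := by
  have hrange : ¬ Function.Surjective ⇑T ↔ LinearMap.range (T : (ℂ × ℂ) →ₗ[ℝ] ℂ) ≠ ⊤ := by
    constructor
    · intro h h'; exact h (LinearMap.range_eq_top.mp h')
    · intro h h'; exact h (LinearMap.range_eq_top.mpr h')
  rw [hrange, ne_eq, ← Submodule.orthogonal_eq_bot_iff (K := LinearMap.range (T : (ℂ × ℂ) →ₗ[ℝ] ℂ)),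
    ← ne_eq, Submodule.ne_bot_iff]
  constructor
  · rintro ⟨w, hw, hw0⟩
    refine ⟨w, hw0, fun x => ?_⟩
    have := (Submodule.mem_orthogonal _ w).mp hw (T x) (LinearMap.mem_range_self _ x)
    rw [real_inner_eq_re_inner (𝕜 := ℂ), RCLike.inner_apply'] at this
    exact this
  · rintro ⟨w, hw0, hw⟩
    refine ⟨w, ?_, hw0⟩
    rw [Submodule.mem_orthogonal]
    rintro y ⟨x, rfl⟩
    rw [real_inner_eq_re_inner (𝕜 := ℂ), RCLike.inner_apply']
    exact hw x

lemma deriv_formula (p q : ℕ) (μ u v : ℂ) (x : ℂ × ℂ) :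
    fderiv ℝ (fun z : ℂ × ℂ =>
        μ * (z.1 ^ p + (starRingEnd ℂ) z.1) + z.2 ^ q + (starRingEnd ℂ) z.2) (u, v) x
    = μ * ((p : ℂ) * u ^ (p - 1) * x.1 + starRingEnd ℂ x.1)
      + (q : ℂ) * v ^ (q - 1) * x.2 + starRingEnd ℂ x.2 := by
  set conjL : ℂ →L[ℝ] ℂ := Complex.conjCLE.toContinuousLinearMap with hconjL
  set fstL := ContinuousLinearMap.fst ℝ ℂ ℂ
  set sndL := ContinuousLinearMap.snd ℝ ℂ ℂ
  set Dp : ℂ →L[ℝ] ℂ :=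
    (ContinuousLinearMap.smulRight (1 : ℂ →L[ℂ] ℂ) ((p : ℂ) * u ^ (p - 1))).restrictScalars ℝ
  set Dq : ℂ →L[ℝ] ℂ :=
    (ContinuousLinearMap.smulRight (1 : ℂ →L[ℂ] ℂ) ((q : ℂ) * v ^ (q - 1))).restrictScalars ℝ
  have hconj : HasFDerivAt (fun z : ℂ => (starRingEnd ℂ) z) conjL u :=
    (Complex.conjCLE.toContinuousLinearMap).hasFDerivAt
  have h1 : HasFDerivAt (fun z : ℂ × ℂ => z.1 ^ p + (starRingEnd ℂ) z.1)
      (Dp.comp fstL + conjL.comp fstL) (u, v) := by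
    exact (((hasDerivAt_pow p u).hasFDerivAt.restrictScalars ℝ).comp (u, v)
      (hasFDerivAt_fst)).add ((conjL.hasFDerivAt).comp (u, v) hasFDerivAt_fst)
  have h2 : HasFDerivAt (fun z : ℂ × ℂ => z.2 ^ q) (Dq.comp sndL) (u, v) :=
    ((hasDerivAt_pow q v).hasFDerivAt.restrictScalars ℝ).comp (u, v) hasFDerivAt_snd
  have h3 : HasFDerivAt (fun z : ℂ × ℂ => (starRingEnd ℂ) z.2) (conjL.comp sndL) (u, v) :=
    (conjL.hasFDerivAt).comp (u, v) hasFDerivAt_snd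
  have hD : HasFDerivAt (fun z : ℂ × ℂ =>
      μ * (z.1 ^ p + (starRingEnd ℂ) z.1) + z.2 ^ q + (starRingEnd ℂ) z.2)
      ((μ • (Dp.comp fstL + conjL.comp fstL)) + Dq.comp sndL + conjL.comp sndL) (u, v) :=
    ((h1.const_mul μ).add h2).add h3
  rw [hD.fderiv]
  simp [Dp, Dq, conjL, fstL, sndL, mul_add, smul_eq_mul]
  ring

lemma w_iff (a cc μ : ℂ) (hμ : μ ≠ 0) :
    (∃ w : ℂ, w ≠ 0 ∧ (μ * a * (starRingEnd ℂ) w + (starRingEnd ℂ) μ * w = 0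
      ∧ cc * (starRingEnd ℂ) w + w = 0))
    ↔ (‖cc‖ = 1 ∧ μ * a = (starRingEnd ℂ) μ * cc) := by
  constructor
  · rintro ⟨w, hw, E1, E2⟩
    have hwc : (starRingEnd ℂ) w ≠ 0 := by simpa using hw
    have h2 : cc * (starRingEnd ℂ) w = -w := by linear_combination E2
    have habs : ‖cc‖ = 1 := by
      have h3 : ‖cc * (starRingEnd ℂ) w‖ = ‖-w‖ := by rw [h2]
      rw [norm_mul, norm_neg, Complex.norm_conj] at h3
      have hwabs : ‖w‖ ≠ 0 := norm_ne_zero_iff.mpr hw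
      field_simp at h3
      exact h3
    refine ⟨habs, ?_⟩
    have h1 : μ * a * (starRingEnd ℂ) w = -((starRingEnd ℂ) μ * w) := by linear_combination E1
    have : μ * a * (starRingEnd ℂ) w = (starRingEnd ℂ) μ * cc * (starRingEnd ℂ) w := by
      rw [h1, mul_assoc, h2]; ring
    exact mul_right_cancel₀ hwc this
  · rintro ⟨habs, heq⟩
    have hcc : cc ≠ 0 := by
      intro h; rw [h] at habs; simp at habs
    obtain ⟨s, hs⟩ : ∃ s : ℂ, s ^ 2 = -cc := ⟨Complex.exp (Complex.log (-cc) / 2), by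
      rw [← Complex.exp_nat_mul]
      push_cast
      rw [mul_div_cancel₀ _ (two_ne_zero), Complex.exp_log (neg_ne_zero.mpr hcc)]⟩
    have hs0 : s ≠ 0 := by
      intro h; rw [h] at hs; simp at hs
      exact hcc hs
    have hnorm : s * (starRingEnd ℂ) s = 1 := by
      rw [Complex.mul_conj]
      have : ‖s‖ ^ 2 = 1 := by
        have : ‖s ^ 2‖ = ‖-cc‖ := by rw [hs]
        rwa [norm_pow, norm_neg, habs] at this
      rw [Complex.normSq_eq_norm_sq, this]
      norm_num
    have E2 : cc * (starRingEnd ℂ) s + s = 0 := by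
      have hcs : cc = -s^2 := by linear_combination hs
      rw [hcs]
      linear_combination (-(s : ℂ)) * hnorm
    exact ⟨s, hs0, by rw [heq]; linear_combination ((starRingEnd ℂ) μ) * E2, E2⟩

lemma exp_per (x : ℝ) (m : ℤ) :
    Complex.exp (Complex.I * ((x + 2 * Real.pi * m : ℝ) : ℂ)) = Complex.exp (Complex.I * (x : ℂ)) := by
  push_cast
  rw [mul_add, Complex.exp_add,
    show Complex.I * (2 * (Real.pi : ℂ) * (m : ℂ)) = (m : ℂ) * (2 * (Real.pi : ℂ) * Complex.I) by ring,
    Complex.exp_int_mul_two_pi_mul_I, mul_one]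

lemma conj_mu (μ : ℂ) :
    μ * Complex.exp (Complex.I * ((-(2 * Complex.arg μ) : ℝ) : ℂ)) = (starRingEnd ℂ) μ := by
  have h := Complex.norm_mul_exp_arg_mul_I μ
  have hconj : (starRingEnd ℂ) μ = ((‖μ‖ : ℝ) : ℂ) * Complex.exp (-(Complex.arg μ : ℂ) * Complex.I) := by
    conv_lhs => rw [← h]
    rw [map_mul, ← Complex.exp_conj]
    simp
  rw [hconj]
  nth_rewrite 1 [← h]
  rw [mul_assoc, ← Complex.exp_add]
  congr 1
  push_cast
  ring

lemma arith (p' q' r : ℕ) (hp' : 0 < p') (hr : r = Nat.gcd p' q')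
    (x φ ψ : ℝ) (M : ℤ) (hM : x + p' * φ - q' * ψ = 2 * Real.pi * M) :
    ∃ k : ℕ, k < r ∧ ∃ θ : ℝ, ∃ m n : ℤ,
      (q' : ℝ) * θ / r + (-x + 2 * Real.pi * k) / p' = φ + 2 * Real.pi * m ∧
      (p' : ℝ) * θ / r = ψ + 2 * Real.pi * n := by
  have hrpos : 0 < r := hr ▸ Nat.gcd_pos_of_pos_left _ hp'
  set k : ℕ := (M % (r : ℤ)).toNat with hk
  set t : ℤ := M / (r : ℤ) with ht
  have hkZ : (k : ℤ) = M % (r : ℤ) :=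
    Int.toNat_of_nonneg (Int.emod_nonneg M (by exact_mod_cast hrpos.ne'))
  have hklt : k < r := by
    have := Int.emod_lt_of_pos M (by exact_mod_cast hrpos : (0:ℤ) < (r:ℤ))
    omega
  have htk : (M : ℤ) = (r : ℤ) * t + k := by
    rw [hkZ, ht]; exact (Int.mul_ediv_add_emod M r).symm
  set α : ℤ := Int.gcdA p' q' with hα
  set β : ℤ := Int.gcdB p' q' with hβ
  have hbez : (r : ℤ) = (p' : ℤ) * α + (q' : ℤ) * β := by
    rw [hr]
    have := Int.gcd_eq_gcd_ab (p' : ℤ) (q' : ℤ)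
    rwa [Int.gcd_natCast_natCast] at this
  refine ⟨k, hklt, (r : ℝ) * (ψ + 2 * Real.pi * (t * β)) / p', -(t * α), t * β, ?_, ?_⟩
  · have hbezR : (r : ℝ) = (p' : ℝ) * α + (q' : ℝ) * β := by exact_mod_cast hbez
    have htkR : (M : ℝ) = (r : ℝ) * t + k := by exact_mod_cast htk
    have hp'R : (p' : ℝ) ≠ 0 := by positivity
    have hrR : (r : ℝ) ≠ 0 := by positivity
    have e1 : (q' : ℝ) * ((r : ℝ) * (ψ + 2 * Real.pi * ((t : ℤ) * (β : ℤ))) / p') / r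
        = ((q' : ℝ) * (ψ + 2 * Real.pi * ((t:ℝ) * (β:ℝ)))) / p' := by
      field_simp
    push_cast at e1 ⊢
    rw [e1, ← add_div, div_eq_iff hp'R]
    linear_combination (-1 : ℝ) * hM + (-(2*Real.pi)) * htkR + (-(2*Real.pi*(t:ℝ))) * hbezR
  · have hp'R : (p' : ℝ) ≠ 0 := by positivity
    have hrR : (r : ℝ) ≠ 0 := by positivity
    field_simp
    push_cast; ring

lemma polar_iff (p q : ℕ) (hp : 2 ≤ p) (hq : 2 ≤ q) (μ : ℂ) (hμ : μ ≠ 0)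
    (r : ℕ) (hr : r = Nat.gcd (p - 1) (q - 1))
    (A B : ℝ)
    (hA : A = 1 / (p : ℝ) ^ ((1 : ℝ) / ((p : ℝ) - 1)))
    (hB : B = 1 / (q : ℝ) ^ ((1 : ℝ) / ((q : ℝ) - 1)))
    (c : ℕ → ℝ)
    (hc : ∀ k : ℕ, c k = (-2 * Complex.arg μ + 2 * Real.pi * k) / ((p : ℝ) - 1))
    (u v : ℂ) :
    (‖(q : ℂ) * v ^ (q - 1)‖ = 1 ∧
      μ * ((p : ℂ) * u ^ (p - 1)) = (starRingEnd ℂ) μ * ((q : ℂ) * v ^ (q - 1)))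
    ↔ ∃ k < r, ∃ θ : ℝ,
        u = (A : ℂ) * Complex.exp (Complex.I * ((((q : ℝ) - 1) * θ / r + c k : ℝ) : ℂ)) ∧
        v = (B : ℂ) * Complex.exp (Complex.I * ((((p : ℝ) - 1) * θ / r : ℝ) : ℂ)) := by
  have hp0 : (0:ℝ) < p := by positivity
  have hq0 : (0:ℝ) < q := by positivity
  have hp1 : (0:ℝ) < (p:ℝ) - 1 := by
    have : (2:ℝ) ≤ p := by exact_mod_cast hp
    linarith
  have hq1 : (0:ℝ) < (q:ℝ) - 1 := by
    have : (2:ℝ) ≤ q := by exact_mod_cast hq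
    linarith
  have hpc : ((p - 1 : ℕ) : ℝ) = (p:ℝ) - 1 := by
    have : (1:ℕ) ≤ p := by omega
    push_cast [this]; ring
  have hqc : ((q - 1 : ℕ) : ℝ) = (q:ℝ) - 1 := by
    have : (1:ℕ) ≤ q := by omega
    push_cast [this]; ring
  have hA0 : 0 < A := by rw [hA]; positivity
  have hB0 : 0 < B := by rw [hB]; positivity
  have hApow : A ^ (p - 1) = 1 / (p:ℝ) := by
    rw [hA, div_pow, one_pow, ← Real.rpow_natCast ((p:ℝ) ^ ((1:ℝ)/((p:ℝ)-1))) (p-1),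
      ← Real.rpow_mul hp0.le, hpc, one_div_mul_cancel hp1.ne', Real.rpow_one]
  have hBpow : B ^ (q - 1) = 1 / (q:ℝ) := by
    rw [hB, div_pow, one_pow, ← Real.rpow_natCast ((q:ℝ) ^ ((1:ℝ)/((q:ℝ)-1))) (q-1),
      ← Real.rpow_mul hq0.le, hqc, one_div_mul_cancel hq1.ne', Real.rpow_one]
  have hApowC : ((A:ℂ)) ^ (p - 1) = 1 / (p:ℂ) := by
    rw [← Complex.ofReal_pow, hApow]; push_cast; ring
  have hBpowC : ((B:ℂ)) ^ (q - 1) = 1 / (q:ℂ) := by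
    rw [← Complex.ofReal_pow, hBpow]; push_cast; ring
  have hpC : (p:ℂ) ≠ 0 := by exact_mod_cast hp0.ne'
  have hqC : (q:ℂ) ≠ 0 := by exact_mod_cast hq0.ne'
  have hr0 : 0 < r := by rw [hr]; exact Nat.gcd_pos_of_pos_left _ (by omega)
  have hrR : (r:ℝ) ≠ 0 := by positivity
  have hvpowgen : ∀ s : ℝ, (q:ℂ) * ((B:ℂ) * Complex.exp (Complex.I * (s:ℂ))) ^ (q - 1)
      = Complex.exp (Complex.I * ((((q:ℝ)-1) * s : ℝ) : ℂ)) := by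
    intro s
    rw [mul_pow, ← Complex.exp_nat_mul, hBpowC]
    rw [show ((q - 1 : ℕ) : ℂ) = ((((q:ℝ)-1) : ℝ) : ℂ) from by rw [← hqc]; norm_cast]
    rw [show ((((q:ℝ)-1) : ℝ) : ℂ) * (Complex.I * (s:ℂ)) = Complex.I * ((((q:ℝ)-1) * s : ℝ):ℂ) by
      push_cast; ring]
    field_simp
  have hupowgen : ∀ s : ℝ, (p:ℂ) * ((A:ℂ) * Complex.exp (Complex.I * (s:ℂ))) ^ (p - 1)
      = Complex.exp (Complex.I * ((((p:ℝ)-1) * s : ℝ) : ℂ)) := by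
    intro s
    rw [mul_pow, ← Complex.exp_nat_mul, hApowC]
    rw [show ((p - 1 : ℕ) : ℂ) = ((((p:ℝ)-1) : ℝ) : ℂ) from by rw [← hpc]; norm_cast]
    rw [show ((((p:ℝ)-1) : ℝ) : ℂ) * (Complex.I * (s:ℂ)) = Complex.I * ((((p:ℝ)-1) * s : ℝ):ℂ) by
      push_cast; ring]
    field_simp
  constructor
  · rintro ⟨h1, h2⟩
    -- |v| = B, |u| = A
    have habsv : ‖v‖ = B := by
      have h1' : (q:ℝ) * ‖v‖ ^ (q-1) = 1 := by
        have := h1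
        rwa [norm_mul, norm_pow, Complex.norm_natCast] at this
      have : ‖v‖ ^ (q-1) = B ^ (q-1) := by
        rw [hBpow]; field_simp at h1' ⊢; linarith
      exact (pow_left_inj₀ (by positivity) hB0.le (by omega)).mp this
    have habsu : ‖u‖ = A := by
      have h2' : ‖μ * ((p : ℂ) * u ^ (p - 1))‖ = ‖(starRingEnd ℂ) μ * ((q : ℂ) * v ^ (q - 1))‖ := by
        rw [h2]
      simp only [norm_mul, norm_pow, Complex.norm_conj, Complex.norm_natCast] at h2'
      have h1' : (q:ℝ) * ‖v‖ ^ (q-1) = 1 := by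
        have := h1
        rwa [norm_mul, norm_pow, Complex.norm_natCast] at this
      rw [h1', mul_one] at h2'
      have hμ0 : ‖μ‖ ≠ 0 := norm_ne_zero_iff.mpr hμ
      have h2'' : (p:ℝ) * ‖u‖ ^ (p-1) = 1 := by
        field_simp at h2'
        linarith
      have : ‖u‖ ^ (p-1) = A ^ (p-1) := by
        rw [hApow]; field_simp at h2'' ⊢; linarith
      exact (pow_left_inj₀ (by positivity) hA0.le (by omega)).mp this
    set φ : ℝ := Complex.arg u with hφ
    set ψ : ℝ := Complex.arg v with hψ
    have hu : u = (A:ℂ) * Complex.exp (Complex.I * (φ : ℂ)) := by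
      conv_lhs => rw [← Complex.norm_mul_exp_arg_mul_I u]
      rw [habsu, mul_comm ((Complex.arg u : ℝ) : ℂ) Complex.I]
    have hv : v = (B:ℂ) * Complex.exp (Complex.I * (ψ : ℂ)) := by
      conv_lhs => rw [← Complex.norm_mul_exp_arg_mul_I v]
      rw [habsv, mul_comm ((Complex.arg v : ℝ) : ℂ) Complex.I]
    have h2' : μ * Complex.exp (Complex.I * ((((p:ℝ)-1) * φ : ℝ):ℂ))
        = (starRingEnd ℂ) μ * Complex.exp (Complex.I * ((((q:ℝ)-1) * ψ : ℝ):ℂ)) := by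
      rw [← hupowgen φ, ← hvpowgen ψ, ← hu, ← hv]
      exact h2
    rw [← conj_mu μ] at h2'
    have h2'' : Complex.exp (Complex.I * ((((p:ℝ)-1) * φ : ℝ):ℂ))
        = Complex.exp (Complex.I * ((-(2 * Complex.arg μ) : ℝ):ℂ) + Complex.I * ((((q:ℝ)-1) * ψ : ℝ):ℂ)) := by
      rw [Complex.exp_add]
      apply mul_left_cancel₀ hμ
      rw [h2']; ring
    obtain ⟨M, hMc⟩ := Complex.exp_eq_exp_iff_exists_int.mp h2''
    have hMc' : Complex.I * ((((p:ℝ)-1) * φ : ℝ):ℂ)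
        = Complex.I * (((-(2 * Complex.arg μ) + ((q:ℝ)-1) * ψ + 2 * Real.pi * M : ℝ)):ℂ) := by
      rw [hMc]; push_cast; ring
    have hMr : ((p:ℝ)-1) * φ = -(2 * Complex.arg μ) + ((q:ℝ)-1) * ψ + 2 * Real.pi * M := by
      have := mul_left_cancel₀ Complex.I_ne_zero hMc'
      exact_mod_cast this
    have hMM : 2 * Complex.arg μ + ((p - 1 : ℕ):ℝ) * φ - ((q - 1 : ℕ):ℝ) * ψ = 2 * Real.pi * M := by
      rw [hpc, hqc]; linarith
    obtain ⟨k, hk, θ, m, n, e1, e2⟩ := arith (p-1) (q-1) r (by omega) hr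
      (2 * Complex.arg μ) φ ψ M hMM
    refine ⟨k, hk, θ, ?_, ?_⟩
    · have harg : ((q:ℝ)-1) * θ / r + c k = φ + 2 * Real.pi * m := by
        rw [hc, ← hqc, ← hpc]
        linear_combination e1
      rw [harg, exp_per]
      exact hu
    · have harg : ((p:ℝ)-1) * θ / r = ψ + 2 * Real.pi * n := by
        rw [← hpc]
        linear_combination e2
      rw [harg, exp_per]
      exact hv
  · rintro ⟨k, hk, θ, huu, hvv⟩
    set ψ : ℝ := ((p:ℝ) - 1) * θ / r with hψ
    set φ : ℝ := ((q:ℝ) - 1) * θ / r + c k with hφ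
    have hvpow : (q:ℂ) * v ^ (q - 1) = Complex.exp (Complex.I * ((((q:ℝ)-1) * ψ : ℝ) : ℂ)) := by
      rw [hvv]; exact hvpowgen ψ
    have hupow : (p:ℂ) * u ^ (p - 1) = Complex.exp (Complex.I * ((((p:ℝ)-1) * φ : ℝ) : ℂ)) := by
      rw [huu]; exact hupowgen φ
    constructor
    · rw [hvpow, Complex.norm_exp]
      simp
    · rw [hvpow, hupow]
      have harg : ((p:ℝ)-1) * φ = -(2 * Complex.arg μ) + (2*Real.pi*k + ((q:ℝ)-1) * ψ) := by
        rw [hφ, hc, hψ]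
        field_simp
        ring
      rw [harg]
      rw [show ((-(2 * Complex.arg μ) + (2*Real.pi*(k:ℝ) + ((q:ℝ)-1) * ψ) : ℝ) : ℂ)
          = ((-(2 * Complex.arg μ) : ℝ) : ℂ) + ((2*Real.pi*(k:ℝ) : ℝ):ℂ) + ((((q:ℝ)-1) * ψ : ℝ):ℂ) by
        push_cast; ring]
      rw [mul_add, mul_add, Complex.exp_add, Complex.exp_add]
      rw [show Complex.I * ((2*Real.pi*(k:ℝ) : ℝ):ℂ) = (k:ℂ) * (2 * (Real.pi:ℂ) * Complex.I) by
        push_cast; ring]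
      rw [Complex.exp_nat_mul_two_pi_mul_I, mul_one]
      rw [show μ * (Complex.exp (Complex.I * ((-(2 * Complex.arg μ) : ℝ) : ℂ))
            * Complex.exp (Complex.I * ((((q:ℝ)-1) * ψ : ℝ):ℂ)))
          = (μ * Complex.exp (Complex.I * ((-(2 * Complex.arg μ) : ℝ) : ℂ)))
            * Complex.exp (Complex.I * ((((q:ℝ)-1) * ψ : ℝ):ℂ)) by ring]
      rw [conj_mu]

/-- The set of singular points of `P(u,v;μ) = μ(u^p + ū) + v^q + v̄`
is the union of the `r = gcd(p-1, q-1)` curves `C_k` on the torus `{|u| = A, |v| = B}`,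
given by `u = A e^{i((q-1)θ/r + c_k)}`, `v = B e^{i(p-1)θ/r}`. -/
theorem singular_set_parametrization
    (p q : ℕ) (hp : 2 ≤ p) (hq : 2 ≤ q) (μ : ℂ) (hμ : μ ≠ 0)
    (r : ℕ) (hr : r = Nat.gcd (p - 1) (q - 1))
    (A B : ℝ)
    (hA : A = 1 / (p : ℝ) ^ ((1 : ℝ) / ((p : ℝ) - 1)))
    (hB : B = 1 / (q : ℝ) ^ ((1 : ℝ) / ((q : ℝ) - 1)))
    (c : ℕ → ℝ)
    (hc : ∀ k : ℕ, c k = (-2 * Complex.arg μ + 2 * Real.pi * k) / ((p : ℝ) - 1))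
    (u v : ℂ) :
    (¬ Function.Surjective
      ⇑(fderiv ℝ (fun z : ℂ × ℂ =>
          μ * (z.1 ^ p + (starRingEnd ℂ) z.1) + z.2 ^ q + (starRingEnd ℂ) z.2) (u, v)))
    ↔ ∃ k < r, ∃ θ : ℝ,
        u = (A : ℂ) * Complex.exp (Complex.I * ((((q : ℝ) - 1) * θ / r + c k : ℝ) : ℂ)) ∧
        v = (B : ℂ) * Complex.exp (Complex.I * ((((p : ℝ) - 1) * θ / r : ℝ) : ℂ)) := by
  rw [not_surj_iff, ← polar_iff p q hp hq μ hμ r hr A B hA hB c hc u v,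
    ← w_iff ((p:ℂ) * u ^ (p-1)) ((q:ℂ) * v ^ (q-1)) μ hμ]
  apply exists_congr; intro w
  apply and_congr_right; intro hw
  simp only [deriv_formula p q μ u v]
  constructor
  · intro H
    constructor
    · apply (line_cond (μ * ((p:ℂ) * u ^ (p-1))) μ w).mp
      intro h
      have := H (h, 0)
      rw [show μ * ((p:ℂ) * u ^ (p-1) * h + (starRingEnd ℂ) h)
            + (q:ℂ) * v ^ (q-1) * (0:ℂ) + (starRingEnd ℂ) (0:ℂ)
          = μ * ((p:ℂ) * u ^ (p-1)) * h + μ * (starRingEnd ℂ) h by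
        simp; ring] at this
      exact this
    · have := (line_cond ((q:ℂ) * v ^ (q-1)) 1 w).mp (by
        intro k
        have := H (0, k)
        rw [show μ * ((p:ℂ) * u ^ (p-1) * (0:ℂ) + (starRingEnd ℂ) (0:ℂ))
              + (q:ℂ) * v ^ (q-1) * k + (starRingEnd ℂ) k
            = (q:ℂ) * v ^ (q-1) * k + 1 * (starRingEnd ℂ) k by
          simp] at this
        exact this)
      simpa using this
  · rintro ⟨E1, E2⟩ x
    have g1 := (line_cond (μ * ((p:ℂ) * u ^ (p-1))) μ w).mpr E1 x.1
    have g2 := (line_cond ((q:ℂ) * v ^ (q-1)) 1 w).mpr (by simpa using E2) x.2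
    rw [show μ * ((p:ℂ) * u ^ (p-1) * x.1 + (starRingEnd ℂ) x.1)
          + (q:ℂ) * v ^ (q-1) * x.2 + (starRingEnd ℂ) x.2
        = (μ * ((p:ℂ) * u ^ (p-1)) * x.1 + μ * (starRingEnd ℂ) x.1)
          + ((q:ℂ) * v ^ (q-1) * x.2 + 1 * (starRingEnd ℂ) x.2) by ring]
    rw [map_add, add_mul, Complex.add_re, g1, g2, add_zero]
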